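/- Let W* ∈ B(W^(0), R·m^{−1/2}) satisfy (1/n) Σ_{i=1}^n ℓ(y_i F_{W^(0),W*}(x_i)) = ε_NTRF (with respect to the n streamed examples), and let τ > 0. There is an absolute constant c > 0 such that if the SGD step size satisfies η ≤ c·L^{−1}·M(τ)^{−2}, W* ∈ B(W^(0), τ), and the SGD iterates satisfy W^(i) ∈ B(W^(0), τ) for all 0 ≤ i ≤ n−1, then for every 1 ≤ n' ≤ n: ‖W^(0) − W*‖_F² − ‖W^(n') − W*‖_F² ≥ (3/2 − 4 ε_app(τ)) · η · Σ_{i=1}^{n'} L_i(W^(i−1)) − 2 n η ε_NTRF. -/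

import Mathlib

open MeasureTheory ProbabilityTheory Real
open scoped BigOperators ENNReal NNReal

noncomputable section

namespace Paper

/-- ReLU activation. -/
def relu (z : ℝ) : ℝ := max z 0

/-- Formal derivative of the ReLU: `σ'(z) = 1{z > 0}`. -/
def relu' (z : ℝ) : ℝ := if 0 < z then 1 else 0

/-- Cross-entropy loss `ℓ(z) = log(1 + exp(-z))`. -/
def xent (z : ℝ) : ℝ := Real.log (1 + Real.exp (-z))

/-- Derivative of the cross-entropy loss: `ℓ'(z) = -1/(1+e^z)`. -/
def xent' (z : ℝ) : ℝ := -(1 / (1 + Real.exp z))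

/-- `-ℓ'(z) = 1/(1+e^z)`. -/
def negXent' (z : ℝ) : ℝ := 1 / (1 + Real.exp z)

/-- Weight space for an `L`-layer network of width `m` on inputs of dimension `d`.
Every layer is stored as an `m × (m+d)` array; layer `0` only uses the block of the
first `d` columns, layers `1,…,L-2` the block of the first `m` columns, and layer
`L-1` the first row and first `m` columns. -/
abbrev Wts (L m d : ℕ) := Fin L → Fin m → Fin (m + d) → ℝ

/-- Extension of the weights to arbitrary natural layer indices. -/
def extW (L m d : ℕ) (W : Wts L m d) : ℕ → Fin m → Fin (m + d) → ℝ :=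
  fun l => if h : l < L then W ⟨l, h⟩ else fun _ _ => 0

def colD (m d : ℕ) (k : Fin d) : Fin (m + d) := Fin.castLE (Nat.le_add_left d m) k

def colM (m d : ℕ) (k : Fin m) : Fin (m + d) := Fin.castLE (Nat.le_add_right m d) k

/-- Pre-activations: `preact m d W x l` is the vector `W_l σ(W_{l-1} ⋯ σ(W_0 x) ⋯)`
(0-indexed layers). -/
def preact (m d : ℕ) (W : ℕ → Fin m → Fin (m + d) → ℝ) (x : Fin d → ℝ) : ℕ → Fin m → ℝ
  | 0 => fun j => ∑ k : Fin d, W 0 j (colD m d k) * x k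
  | l + 1 => fun j => ∑ k : Fin m, W (l + 1) j (colM m d k) * relu (preact m d W x l k)

/-- Network output `f_W(x) = √m · W_{L-1} σ( ⋯ σ(W_0 x) ⋯ )` (row `0` of the last layer). -/
def netOut (L m d : ℕ) (W : Wts L m d) (x : Fin d → ℝ) : ℝ :=
  Real.sqrt m * ∑ j : Fin m, ∑ k : Fin m,
    (if (j : ℕ) = 0 then
      extW L m d W (L - 1) j (colM m d k) * relu (preact m d (extW L m d W) x (L - 2) k)
    else 0)

/-- Backpropagated errors; `deltaAux L m d W x t` is the delta at pre-activation level
`L - 2 - t`. -/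
def deltaAux (L m d : ℕ) (W : ℕ → Fin m → Fin (m + d) → ℝ) (x : Fin d → ℝ) :
    ℕ → Fin m → ℝ
  | 0 => fun k =>
      Real.sqrt m * (∑ j : Fin m, if (j : ℕ) = 0 then W (L - 1) j (colM m d k) else 0) *
        relu' (preact m d W x (L - 2) k)
  | t + 1 => fun k =>
      relu' (preact m d W x (L - 2 - (t + 1)) k) *
        ∑ j : Fin m, W (L - 2 - t) j (colM m d k) * deltaAux L m d W x t j

/-- Delta at pre-activation level `l`. -/
def delta (L m d : ℕ) (W : ℕ → Fin m → Fin (m + d) → ℝ) (x : Fin d → ℝ) (l : ℕ) :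
    Fin m → ℝ :=
  deltaAux L m d W x (L - 2 - l)

/-- Formal chain-rule gradient `∇_{W_l} f_W(x)` of the network output w.r.t. layer `l`. -/
def gradLayer (L m d : ℕ) (W : Wts L m d) (x : Fin d → ℝ) (l : ℕ) :
    Fin m → Fin (m + d) → ℝ :=
  fun j c =>
    if l = L - 1 then
      (if h : (j : ℕ) = 0 ∧ (c : ℕ) < m then
        Real.sqrt m * relu (preact m d (extW L m d W) x (L - 2) ⟨(c : ℕ), h.2⟩)
      else 0)
    else if l = 0 then
      delta L m d (extW L m d W) x 0 j * (if h : (c : ℕ) < d then x ⟨(c : ℕ), h⟩ else 0)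
    else
      delta L m d (extW L m d W) x l j *
        (if h : (c : ℕ) < m then relu (preact m d (extW L m d W) x (l - 1) ⟨(c : ℕ), h⟩)
         else 0)

/-- Entrywise inner product of two layer matrices. -/
def inner2 (m d : ℕ) (A B : Fin m → Fin (m + d) → ℝ) : ℝ :=
  ∑ j : Fin m, ∑ c : Fin (m + d), A j c * B j c

/-- `⟨∇ f_W(x), V⟩ = Σ_l ⟨∇_{W_l} f_W(x), V_l⟩`. -/
def gradInner (L m d : ℕ) (W : Wts L m d) (x : Fin d → ℝ) (V : Wts L m d) : ℝ :=
  ∑ l : Fin L, inner2 m d (gradLayer L m d W x (l : ℕ)) (V l)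

/-- NTRF model `F_{W⁰,W}(x) = f_{W⁰}(x) + ⟨∇f_{W⁰}(x), W - W⁰⟩`. -/
def ntrf (L m d : ℕ) (W0 W : Wts L m d) (x : Fin d → ℝ) : ℝ :=
  netOut L m d W0 x + gradInner L m d W0 x (W - W0)

/-- Number of rows actually used by layer `l`. -/
def rowsOf (L m : ℕ) (l : ℕ) : ℕ := if l = L - 1 then 1 else m

/-- Number of columns actually used by layer `l`. -/
def colsOf (m d : ℕ) (l : ℕ) : ℕ := if l = 0 then d else m

/-- Squared Frobenius norm of the relevant block of layer `l`. -/
def layerNormSq (L m d : ℕ) (l : ℕ) (A : Fin m → Fin (m + d) → ℝ) : ℝ :=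
  ∑ j : Fin m, ∑ c : Fin (m + d),
    if (j : ℕ) < rowsOf L m l ∧ (c : ℕ) < colsOf m d l then (A j c) ^ 2 else 0

/-- `W ∈ B(W⁰, τ)`, i.e. `max_l ‖W_l − W⁰_l‖_F ≤ τ`. -/
def inBall (L m d : ℕ) (W0 W : Wts L m d) (τ : ℝ) : Prop :=
  ∀ l : Fin L, Real.sqrt (layerNormSq L m d (l : ℕ) (W l - W0 l)) ≤ τ

/-- `‖W − W'‖_F²` summed over all layers. -/
def distSq (L m d : ℕ) (W W' : Wts L m d) : ℝ :=
  ∑ l : Fin L, layerNormSq L m d (l : ℕ) (W l - W' l)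

/-- Loss on a single example. -/
def sampleLoss (L m d : ℕ) (W : Wts L m d) (x : Fin d → ℝ) (y : ℝ) : ℝ :=
  xent (y * netOut L m d W x)

/-- Empirical training loss `L_S(W)`. -/
def trainLoss (L m d n : ℕ) (X : Fin n → Fin d → ℝ) (Y : Fin n → ℝ) (W : Wts L m d) : ℝ :=
  (1 / (n : ℝ)) * ∑ i : Fin n, sampleLoss L m d W (X i) (Y i)

/-- Formal gradient of the single-sample loss w.r.t. layer `l`. -/
def sampleLossGrad (L m d : ℕ) (x : Fin d → ℝ) (y : ℝ) (W : Wts L m d) (l : ℕ) :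
    Fin m → Fin (m + d) → ℝ :=
  fun j c => xent' (y * netOut L m d W x) * y * gradLayer L m d W x l j c

/-- Formal gradient of the empirical loss w.r.t. layer `l`. -/
def trainLossGrad (L m d n : ℕ) (X : Fin n → Fin d → ℝ) (Y : Fin n → ℝ)
    (W : Wts L m d) (l : ℕ) : Fin m → Fin (m + d) → ℝ :=
  fun j c => (1 / (n : ℝ)) * ∑ i : Fin n, sampleLossGrad L m d (X i) (Y i) W l j c

/-- Gradient descent iterates with step size `η` started at `W0`. -/
def gdIter (L m d n : ℕ) (X : Fin n → Fin d → ℝ) (Y : Fin n → ℝ) (η : ℝ)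
    (W0 : Wts L m d) : ℕ → Wts L m d
  | 0 => W0
  | t + 1 => fun l j c =>
      gdIter L m d n X Y η W0 t l j c -
        η * trainLossGrad L m d n X Y (gdIter L m d n X Y η W0 t) (l : ℕ) j c

/-- Online SGD iterates: step `i → i+1` uses the example `S i`. -/
def sgdIter (L m d : ℕ) (S : ℕ → (Fin d → ℝ) × ℝ) (η : ℝ) (W0 : Wts L m d) :
    ℕ → Wts L m d
  | 0 => W0
  | i + 1 => fun l j c =>
      sgdIter L m d S η W0 i l j c -
        η * sampleLossGrad L m d (S i).1 (S i).2 (sgdIter L m d S η W0 i) (l : ℕ) j c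

/-- Extension of a finite sample to a stream. -/
def extS (n d : ℕ) (S : Fin n → (Fin d → ℝ) × ℝ) : ℕ → (Fin d → ℝ) × ℝ :=
  fun i => if h : i < n then S ⟨i, h⟩ else (fun _ => 0, 1)

/-- Linear approximation error `ε_app(τ)` around `W0`. -/
def epsApp (L m d n : ℕ) (X : Fin n → Fin d → ℝ) (W0 : Wts L m d) (τ : ℝ) : ℝ :=
  sSup { e : ℝ | ∃ (i : Fin n) (W W' : Wts L m d),
    inBall L m d W0 W τ ∧ inBall L m d W0 W' τ ∧
    e = |netOut L m d W' (X i) - netOut L m d W (X i) -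
          gradInner L m d W (X i) (W' - W)| }

/-- Gradient norm bound `M(τ)` around `W0`. -/
def gradBound (L m d n : ℕ) (X : Fin n → Fin d → ℝ) (W0 : Wts L m d) (τ : ℝ) : ℝ :=
  sSup { e : ℝ | ∃ (i : Fin n) (l : Fin L) (W : Wts L m d),
    inBall L m d W0 W τ ∧
    e = Real.sqrt (layerNormSq L m d (l : ℕ) (gradLayer L m d W (X i) (l : ℕ))) }

/-- Average cross-entropy loss of the NTRF model `F_{W0,W}` on the training set. -/
def ntrfLoss (L m d n : ℕ) (X : Fin n → Fin d → ℝ) (Y : Fin n → ℝ)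
    (W0 W : Wts L m d) : ℝ :=
  (1 / (n : ℝ)) * ∑ i : Fin n, xent (Y i * ntrf L m d W0 W (X i))

/-- `ε_NTRF`: the minimum training loss achievable by the NTRF class `F(W0, R)`. -/
def epsNTRF (L m d n : ℕ) (X : Fin n → Fin d → ℝ) (Y : Fin n → ℝ)
    (W0 : Wts L m d) (R : ℝ) : ℝ :=
  sInf { e : ℝ | ∃ W : Wts L m d,
    inBall L m d W0 W (R / Real.sqrt m) ∧ e = ntrfLoss L m d n X Y W0 W }

/-- Variance of the Gaussian initialization at layer `l`. -/
def initVar (L m : ℕ) (l : ℕ) : ℝ≥0 := if l = L - 1 then (m : ℝ≥0)⁻¹ else 2 * (m : ℝ≥0)⁻¹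

/-- The Gaussian random initialization: entries of `W_0,…,W_{L-2}` are i.i.d.
`N(0, 2/m)` and entries of `W_{L-1}` are i.i.d. `N(0, 1/m)`. -/
def initMeasure (L m d : ℕ) : Measure (Wts L m d) :=
  Measure.pi fun l : Fin L =>
    Measure.pi fun _ : Fin m =>
      Measure.pi fun _ : Fin (m + d) => gaussianReal 0 (initVar L m (l : ℕ))

/-- Expected 0-1 error `L_D^{0-1}(W)`. -/
def zeroOneLoss (L m d : ℕ) (D : Measure ((Fin d → ℝ) × ℝ)) (W : Wts L m d) : ℝ :=
  (D {p | p.2 * netOut L m d W p.1 < 0}).toReal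

end Paper

open Paper

lemma xent_nonneg (z : ℝ) : 0 ≤ xent z :=
  Real.log_nonneg (by linarith [Real.exp_pos (-z)])

lemma xent'_eq_neg (z : ℝ) : xent' z = - negXent' z := rfl

lemma negXent'_pos (z : ℝ) : 0 < negXent' z := by
  have := Real.exp_pos z
  unfold negXent'; positivity

lemma negXent'_le_one (z : ℝ) : negXent' z ≤ 1 := by
  rw [negXent', div_le_one (by linarith [Real.exp_pos z])]
  linarith [Real.exp_pos z]

lemma negXent'_le_xent (z : ℝ) : negXent' z ≤ xent z := by
  set u := Real.exp (-z) with hu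
  have hu0 : 0 < u := Real.exp_pos _
  have h1 : (0:ℝ) < 1 + u := by linarith
  have hlog : Real.log (1/(1+u)) ≤ 1/(1+u) - 1 := Real.log_le_sub_one_of_pos (by positivity)
  rw [one_div, Real.log_inv] at hlog
  have h2 : u / (1 + u) ≤ Real.log (1 + u) := by
    have : u / (1+u) = 1 - (1+u)⁻¹ := by field_simp; ring
    rw [this]; linarith
  have h3 : negXent' z = u / (1 + u) := by
    rw [negXent', hu, Real.exp_neg]
    have he : Real.exp z ≠ 0 := (Real.exp_pos z).ne'
    field_simp; ring
  rw [h3, xent]; exact h2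

lemma hasDerivAt_xent (z : ℝ) : HasDerivAt xent (xent' z) z := by
  have h0 : HasDerivAt (fun t : ℝ => -t) (-1) z := (hasDerivAt_id z).neg
  have h1 : HasDerivAt (fun t : ℝ => Real.exp (-t)) (Real.exp (-z) * (-1)) z := h0.exp
  have h2 : HasDerivAt (fun t : ℝ => 1 + Real.exp (-t)) (Real.exp (-z) * (-1)) z :=
    h1.const_add 1
  have hne : (1 : ℝ) + Real.exp (-z) ≠ 0 := by positivity
  have h3 := h2.log hne
  have hval : Real.exp (-z) * (-1) / (1 + Real.exp (-z)) = xent' z := by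
    rw [xent', Real.exp_neg]
    have he : Real.exp z ≠ 0 := (Real.exp_pos z).ne'
    field_simp; ring
  rw [hval] at h3
  exact h3

lemma xent'_mono {a b : ℝ} (h : a ≤ b) : xent' a ≤ xent' b := by
  rw [xent', xent', neg_le_neg_iff]
  have ha : (0:ℝ) < 1 + Real.exp a := by positivity
  apply one_div_le_one_div_of_le ha
  have := Real.exp_le_exp.2 h
  linarith

lemma xent_tangent (a b : ℝ) : xent a + xent' a * (b - a) ≤ xent b := by
  have hc : Continuous xent :=
    continuous_iff_continuousAt.mpr fun x => (hasDerivAt_xent x).continuousAt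
  rcases lt_trichotomy a b with h | h | h
  · obtain ⟨ξ, hξ, hs⟩ := exists_hasDerivAt_eq_slope xent xent' h hc.continuousOn
      (fun x _ => hasDerivAt_xent x)
    have h1 : xent' a ≤ (xent b - xent a) / (b - a) := hs ▸ xent'_mono hξ.1.le
    rw [le_div_iff₀ (by linarith)] at h1
    linarith
  · simp [h]
  · obtain ⟨ξ, hξ, hs⟩ := exists_hasDerivAt_eq_slope xent xent' h hc.continuousOn
      (fun x _ => hasDerivAt_xent x)
    have h1 : (xent a - xent b) / (a - b) ≤ xent' a := hs ▸ xent'_mono hξ.2.le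
    rw [div_le_iff₀ (by linarith)] at h1
    linarith

lemma abs_relu_le (z : ℝ) : |relu z| ≤ |z| := by
  rw [relu, abs_of_nonneg (le_max_right z 0)]
  exact max_le (le_abs_self z) (abs_nonneg z)

lemma abs_relu'_le (z : ℝ) : |relu' z| ≤ 1 := by
  rw [relu']; split <;> simp
lemma layerNormSq_nonneg (L m d l : ℕ) (A : Fin m → Fin (m + d) → ℝ) :
    0 ≤ layerNormSq L m d l A := by
  apply Finset.sum_nonneg; intro j _; apply Finset.sum_nonneg; intro c _
  split <;> positivity

lemma sq_le_layerNormSq (L m d l : ℕ) (A : Fin m → Fin (m + d) → ℝ) (j : Fin m)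
    (c : Fin (m + d)) (h : (j : ℕ) < rowsOf L m l ∧ (c : ℕ) < colsOf m d l) :
    (A j c) ^ 2 ≤ layerNormSq L m d l A := by
  unfold layerNormSq
  have h1 : (A j c) ^ 2 ≤ ∑ c' : Fin (m + d),
      (if (j : ℕ) < rowsOf L m l ∧ (c' : ℕ) < colsOf m d l then (A j c') ^ 2 else 0) := by
    have := Finset.single_le_sum (f := fun c' : Fin (m + d) =>
      (if (j : ℕ) < rowsOf L m l ∧ (c' : ℕ) < colsOf m d l then (A j c') ^ 2 else 0))
      (fun i _ => by split <;> positivity) (Finset.mem_univ c)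
    simpa [h] using this
  refine h1.trans ?_
  exact Finset.single_le_sum (f := fun j' : Fin m => ∑ c' : Fin (m + d),
      (if (j' : ℕ) < rowsOf L m l ∧ (c' : ℕ) < colsOf m d l then (A j' c') ^ 2 else 0))
    (fun i _ => Finset.sum_nonneg fun c' _ => by split <;> positivity) (Finset.mem_univ j)

lemma inBall_entry_abs {L m d : ℕ} {W0 W : Wts L m d} {τ : ℝ}
    (hW : inBall L m d W0 W τ) (l : Fin L) (j : Fin m) (c : Fin (m + d))
    (h : (j : ℕ) < rowsOf L m (l : ℕ) ∧ (c : ℕ) < colsOf m d (l : ℕ)) :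
    |W l j c - W0 l j c| ≤ τ := by
  have h1 := sq_le_layerNormSq L m d (l : ℕ) (W l - W0 l) j c h
  have h2 := hW l
  have h3 : |(W l - W0 l) j c| ≤ Real.sqrt (layerNormSq L m d (l : ℕ) (W l - W0 l)) := by
    rw [← Real.sqrt_sq_eq_abs]
    exact Real.sqrt_le_sqrt h1
  simpa [Pi.sub_apply] using h3.trans h2

lemma inBall_self (L m d : ℕ) (W0 : Wts L m d) {τ : ℝ} (hτ : 0 ≤ τ) :
    inBall L m d W0 W0 τ := by
  intro l
  have : layerNormSq L m d (l : ℕ) (W0 l - W0 l) = 0 := by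
    simp [layerNormSq]
  rw [this, Real.sqrt_zero]; exact hτ

lemma gradLayer_off_block {L m d : ℕ} (hL : 2 ≤ L) (W : Wts L m d) (x : Fin d → ℝ)
    (l : ℕ) (j : Fin m) (c : Fin (m + d))
    (h : ¬((j : ℕ) < rowsOf L m l ∧ (c : ℕ) < colsOf m d l)) :
    gradLayer L m d W x l j c = 0 := by
  unfold rowsOf colsOf at h
  unfold gradLayer
  by_cases h1 : l = L - 1
  · have h0 : l ≠ 0 := by omega
    rw [if_pos h1] at h ⊢
    rw [if_neg h0] at h
    rw [dif_neg]
    intro hjc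
    exact h ⟨by omega, hjc.2⟩
  · rw [if_neg h1] at h ⊢
    by_cases h2 : l = 0
    · rw [if_pos h2] at h ⊢
      rw [dif_neg, mul_zero]
      intro hc
      exact h ⟨j.isLt, hc⟩
    · rw [if_neg h2] at h ⊢
      rw [dif_neg, mul_zero]
      intro hc
      exact h ⟨j.isLt, hc⟩

lemma layerNormSq_step (L m d : ℕ) (l : ℕ) (η u : ℝ) (A G : Fin m → Fin (m + d) → ℝ)
    (hG : ∀ (j : Fin m) (c : Fin (m + d)),
      ¬((j : ℕ) < rowsOf L m l ∧ (c : ℕ) < colsOf m d l) → G j c = 0) :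
    layerNormSq L m d l (fun j c => A j c - η * (u * G j c))
      = layerNormSq L m d l A - 2 * η * (u * inner2 m d G A)
        + η ^ 2 * (u ^ 2 * inner2 m d G G) := by
  simp only [layerNormSq, inner2, Finset.mul_sum, ← Finset.sum_sub_distrib,
    ← Finset.sum_add_distrib]
  refine Finset.sum_congr rfl fun j _ => Finset.sum_congr rfl fun c _ => ?_
  by_cases h : (j : ℕ) < rowsOf L m l ∧ (c : ℕ) < colsOf m d l
  · simp only [if_pos h]; ring
  · simp only [if_neg h, hG j c h]; ring

lemma inner2_self_eq_layerNormSq (L m d : ℕ) (l : ℕ) (G : Fin m → Fin (m + d) → ℝ)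
    (hG : ∀ (j : Fin m) (c : Fin (m + d)),
      ¬((j : ℕ) < rowsOf L m l ∧ (c : ℕ) < colsOf m d l) → G j c = 0) :
    inner2 m d G G = layerNormSq L m d l G := by
  unfold inner2 layerNormSq
  refine Finset.sum_congr rfl fun j _ => Finset.sum_congr rfl fun c _ => ?_
  by_cases h : (j : ℕ) < rowsOf L m l ∧ (c : ℕ) < colsOf m d l
  · rw [if_pos h]; ring
  · rw [if_neg h, hG j c h, mul_zero]

lemma inner2_nonneg_self (m d : ℕ) (G : Fin m → Fin (m + d) → ℝ) :
    0 ≤ inner2 m d G G := by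
  apply Finset.sum_nonneg; intro j _; apply Finset.sum_nonneg; intro c _
  exact mul_self_nonneg _

lemma gradInner_sub_neg (L m d : ℕ) (W : Wts L m d) (x : Fin d → ℝ) (A B : Wts L m d) :
    gradInner L m d W x (A - B) = - gradInner L m d W x (B - A) := by
  unfold gradInner inner2
  rw [← Finset.sum_neg_distrib]
  refine Finset.sum_congr rfl fun l _ => ?_
  rw [← Finset.sum_neg_distrib]
  refine Finset.sum_congr rfl fun j _ => ?_
  rw [← Finset.sum_neg_distrib]
  refine Finset.sum_congr rfl fun c _ => ?_
  simp only [Pi.sub_apply]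
  ring

lemma abs_sum_sum_le {α β : Type*} [Fintype α] [Fintype β] (f : α → β → ℝ) (t : ℝ)
    (h : ∀ a b, |f a b| ≤ t) :
    |∑ a : α, ∑ b : β, f a b| ≤ (Fintype.card α : ℝ) * ((Fintype.card β : ℝ) * t) := by
  calc |∑ a : α, ∑ b : β, f a b| ≤ ∑ a : α, |∑ b : β, f a b| :=
        Finset.abs_sum_le_sum_abs _ _
    _ ≤ ∑ _a : α, ((Fintype.card β : ℝ) * t) := by
        refine Finset.sum_le_sum fun a _ => (Finset.abs_sum_le_sum_abs _ _).trans ?_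
        calc ∑ b : β, |f a b| ≤ ∑ _b : β, t := Finset.sum_le_sum fun b _ => h a b
          _ = (Fintype.card β : ℝ) * t := by
              simp [Finset.sum_const, nsmul_eq_mul]
    _ = (Fintype.card α : ℝ) * ((Fintype.card β : ℝ) * t) := by
        simp [Finset.sum_const, nsmul_eq_mul]

/-- Entry bound hypothesis on the relevant blocks. -/
def EntryBd (L m d : ℕ) (W : Wts L m d) (K : ℝ) : Prop :=
  ∀ (l' : Fin L) (j : Fin m) (c : Fin (m + d)),
    ((j : ℕ) < rowsOf L m (l' : ℕ) ∧ (c : ℕ) < colsOf m d (l' : ℕ)) → |W l' j c| ≤ K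

lemma preact_bound (L m d : ℕ) (hL : 2 ≤ L) (K : ℝ) (hK : 0 ≤ K) :
    ∀ l : ℕ, ∃ C : ℝ, 0 ≤ C ∧ ∀ (W : Wts L m d) (x : Fin d → ℝ),
      (∀ k, |x k| ≤ 1) → EntryBd L m d W K →
      l ≤ L - 2 → ∀ j, |preact m d (extW L m d W) x l j| ≤ C := by
  intro l
  induction l with
  | zero =>
    refine ⟨(d : ℝ) * K, by positivity, fun W x hx hW _ j => ?_⟩
    have h0L : 0 < L := by omega
    simp only [preact, extW, dif_pos h0L]
    calc |∑ k : Fin d, W ⟨0, h0L⟩ j (colD m d k) * x k|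
        ≤ ∑ k : Fin d, |W ⟨0, h0L⟩ j (colD m d k) * x k| := Finset.abs_sum_le_sum_abs _ _
      _ ≤ ∑ _k : Fin d, K * 1 := by
          refine Finset.sum_le_sum fun k _ => ?_
          rw [abs_mul]
          refine mul_le_mul ?_ (hx k) (abs_nonneg _) hK
          refine hW ⟨0, h0L⟩ j (colD m d k) ⟨?_, ?_⟩
          · show (j : ℕ) < rowsOf L m 0
            rw [rowsOf, if_neg (by omega)]; exact j.isLt
          · show ((colD m d k : Fin (m + d)) : ℕ) < colsOf m d 0
            rw [colsOf, if_pos rfl]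
            simpa [colD] using k.isLt
      _ = (d : ℝ) * K := by simp [Finset.sum_const, nsmul_eq_mul]
  | succ l ih =>
    obtain ⟨C, hC0, hC⟩ := ih
    refine ⟨(m : ℝ) * (K * C), by positivity, fun W x hx hW hl j => ?_⟩
    have hlL : l + 1 < L := by omega
    simp only [preact, extW, dif_pos hlL]
    calc |∑ k : Fin m, W ⟨l + 1, hlL⟩ j (colM m d k) * relu (preact m d (extW L m d W) x l k)|
        ≤ ∑ k : Fin m, |W ⟨l + 1, hlL⟩ j (colM m d k) * relu (preact m d (extW L m d W) x l k)| :=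
          Finset.abs_sum_le_sum_abs _ _
      _ ≤ ∑ _k : Fin m, K * C := by
          refine Finset.sum_le_sum fun k _ => ?_
          rw [abs_mul]
          refine mul_le_mul ?_ ((abs_relu_le _).trans (hC W x hx hW (by omega) k))
            (abs_nonneg _) hK
          refine hW ⟨l + 1, hlL⟩ j (colM m d k) ⟨?_, ?_⟩
          · show (j : ℕ) < rowsOf L m (l + 1)
            rw [rowsOf, if_neg (by omega)]; exact j.isLt
          · show ((colM m d k : Fin (m + d)) : ℕ) < colsOf m d (l + 1)
            rw [colsOf, if_neg (by omega)]
            simpa [colM] using k.isLt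
      _ = (m : ℝ) * (K * C) := by simp [Finset.sum_const, nsmul_eq_mul]

lemma deltaAux_bound (L m d : ℕ) (hL : 2 ≤ L) (hm : 1 ≤ m) (K : ℝ) (hK : 0 ≤ K) :
    ∀ t : ℕ, ∃ C : ℝ, 0 ≤ C ∧ ∀ (W : Wts L m d) (x : Fin d → ℝ),
      EntryBd L m d W K →
      t ≤ L - 2 → ∀ k, |deltaAux L m d (extW L m d W) x t k| ≤ C := by
  intro t
  induction t with
  | zero =>
    refine ⟨Real.sqrt m * K, by positivity, fun W x hW _ k => ?_⟩
    have hm' : 0 < m := hm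
    have hL1 : L - 1 < L := by omega
    have hsum : (∑ j : Fin m, if (j : ℕ) = 0 then extW L m d W (L - 1) j (colM m d k) else 0)
        = extW L m d W (L - 1) ⟨0, hm'⟩ (colM m d k) := by
      rw [Finset.sum_eq_single (⟨0, hm'⟩ : Fin m)]
      · rw [if_pos rfl]
      · intro b _ hb
        rw [if_neg]
        intro hb0
        exact hb (Fin.ext hb0)
      · intro h; exact absurd (Finset.mem_univ _) h
    simp only [deltaAux]
    rw [hsum]
    have hE : |extW L m d W (L - 1) ⟨0, hm'⟩ (colM m d k)| ≤ K := by
      simp only [extW, dif_pos hL1]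
      refine hW ⟨L - 1, hL1⟩ ⟨0, hm'⟩ (colM m d k) ⟨?_, ?_⟩
      · show (0 : ℕ) < rowsOf L m (L - 1)
        rw [rowsOf, if_pos rfl]; omega
      · show ((colM m d k : Fin (m + d)) : ℕ) < colsOf m d (L - 1)
        rw [colsOf, if_neg (by omega)]
        simpa [colM] using k.isLt
    calc |Real.sqrt m * extW L m d W (L - 1) ⟨0, hm'⟩ (colM m d k) *
            relu' (preact m d (extW L m d W) x (L - 2) k)|
        = Real.sqrt m * |extW L m d W (L - 1) ⟨0, hm'⟩ (colM m d k)| *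
            |relu' (preact m d (extW L m d W) x (L - 2) k)| := by
          rw [abs_mul, abs_mul, abs_of_nonneg (Real.sqrt_nonneg _)]
      _ ≤ Real.sqrt m * K * 1 := by
          apply mul_le_mul _ (abs_relu'_le _) (abs_nonneg _) (by positivity)
          exact mul_le_mul_of_nonneg_left hE (Real.sqrt_nonneg _)
      _ = Real.sqrt m * K := mul_one _
  | succ t ih =>
    obtain ⟨C, hC0, hC⟩ := ih
    refine ⟨(m : ℝ) * (K * C), by positivity, fun W x hW ht k => ?_⟩
    have haL : L - 2 - t < L := by omega
    simp only [deltaAux]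
    rw [abs_mul]
    have h1 : |relu' (preact m d (extW L m d W) x (L - 2 - (t + 1)) k)| ≤ 1 := abs_relu'_le _
    have h2 : |∑ j : Fin m, extW L m d W (L - 2 - t) j (colM m d k) *
        deltaAux L m d (extW L m d W) x t j| ≤ (m : ℝ) * (K * C) := by
      calc |∑ j : Fin m, extW L m d W (L - 2 - t) j (colM m d k) *
              deltaAux L m d (extW L m d W) x t j|
          ≤ ∑ j : Fin m, |extW L m d W (L - 2 - t) j (colM m d k) *
              deltaAux L m d (extW L m d W) x t j| := Finset.abs_sum_le_sum_abs _ _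
        _ ≤ ∑ _j : Fin m, K * C := by
            refine Finset.sum_le_sum fun j _ => ?_
            rw [abs_mul]
            refine mul_le_mul ?_ (hC W x hW (by omega) j) (abs_nonneg _) hK
            simp only [extW, dif_pos haL]
            refine hW ⟨L - 2 - t, haL⟩ j (colM m d k) ⟨?_, ?_⟩
            · show (j : ℕ) < rowsOf L m (L - 2 - t)
              rw [rowsOf, if_neg (by omega)]; exact j.isLt
            · show ((colM m d k : Fin (m + d)) : ℕ) < colsOf m d (L - 2 - t)
              rw [colsOf, if_neg (by omega)]
              simpa [colM] using k.isLt
        _ = (m : ℝ) * (K * C) := by simp [Finset.sum_const, nsmul_eq_mul]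
    calc |relu' (preact m d (extW L m d W) x (L - 2 - (t + 1)) k)| *
            |∑ j : Fin m, extW L m d W (L - 2 - t) j (colM m d k) *
              deltaAux L m d (extW L m d W) x t j|
        ≤ 1 * ((m : ℝ) * (K * C)) := mul_le_mul h1 h2 (abs_nonneg _) zero_le_one
      _ = (m : ℝ) * (K * C) := one_mul _

lemma gradLayer_bound (L m d : ℕ) (hL : 2 ≤ L) (hm : 1 ≤ m) (K : ℝ) (hK : 0 ≤ K) :
    ∃ C : ℝ, 0 ≤ C ∧ ∀ (W : Wts L m d) (x : Fin d → ℝ),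
      (∀ k, |x k| ≤ 1) → EntryBd L m d W K →
      ∀ l : ℕ, l < L → ∀ (j : Fin m) (c : Fin (m + d)),
        |gradLayer L m d W x l j c| ≤ C := by
  choose CP hCP0 hCP using preact_bound L m d hL K hK
  choose CD hCD0 hCD using deltaAux_bound L m d hL hm K hK
  have hLne : (Finset.range L).Nonempty := Finset.nonempty_range_iff.mpr (by omega)
  set CPm := (Finset.range L).sup' hLne CP with hCPmdef
  set CDm := (Finset.range L).sup' hLne CD with hCDmdef
  have hCPm : ∀ l < L, CP l ≤ CPm := fun l hl => Finset.le_sup' CP (Finset.mem_range.mpr hl)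
  have hCDm : ∀ l < L, CD l ≤ CDm := fun l hl => Finset.le_sup' CD (Finset.mem_range.mpr hl)
  have hCPm0 : 0 ≤ CPm := (hCP0 0).trans (hCPm 0 (by omega))
  have hCDm0 : 0 ≤ CDm := (hCD0 0).trans (hCDm 0 (by omega))
  have hL2L : L - 2 < L := by omega
  refine ⟨Real.sqrt m * CPm + CDm + CDm * CPm, by positivity, ?_⟩
  intro W x hx hW l hl j c
  unfold gradLayer
  by_cases h1 : l = L - 1
  · rw [if_pos h1]
    by_cases h : (j : ℕ) = 0 ∧ (c : ℕ) < m
    · rw [dif_pos h]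
      have hp : |preact m d (extW L m d W) x (L - 2) ⟨(c : ℕ), h.2⟩| ≤ CPm :=
        (hCP (L - 2) W x hx hW le_rfl _).trans (hCPm _ hL2L)
      have : |Real.sqrt m * relu (preact m d (extW L m d W) x (L - 2) ⟨(c : ℕ), h.2⟩)|
          ≤ Real.sqrt m * CPm := by
        rw [abs_mul, abs_of_nonneg (Real.sqrt_nonneg _)]
        exact mul_le_mul_of_nonneg_left ((abs_relu_le _).trans hp) (Real.sqrt_nonneg _)
      nlinarith [mul_nonneg hCDm0 hCPm0]
    · rw [dif_neg h, abs_zero]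
      positivity
  · rw [if_neg h1]
    have hlle : l ≤ L - 2 := by omega
    by_cases h2 : l = 0
    · rw [if_pos h2]
      have hδ : |delta L m d (extW L m d W) x 0 j| ≤ CDm := by
        rw [delta, Nat.sub_zero]
        exact (hCD (L - 2) W x hW le_rfl j).trans (hCDm _ hL2L)
      have hxx : |(if hc : (c : ℕ) < d then x ⟨(c : ℕ), hc⟩ else 0)| ≤ 1 := by
        split
        · exact hx _
        · rw [abs_zero]; exact zero_le_one
      rw [abs_mul]
      have : |delta L m d (extW L m d W) x 0 j| *
          |(if hc : (c : ℕ) < d then x ⟨(c : ℕ), hc⟩ else 0)| ≤ CDm * 1 :=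
        mul_le_mul hδ hxx (abs_nonneg _) hCDm0
      nlinarith [mul_nonneg hCDm0 hCPm0, mul_nonneg (Real.sqrt_nonneg (m : ℝ)) hCPm0]
    · rw [if_neg h2]
      have hδ : |delta L m d (extW L m d W) x l j| ≤ CDm := by
        rw [delta]
        exact (hCD (L - 2 - l) W x hW (by omega) j).trans (hCDm _ (by omega))
      have hrr : |(if hc : (c : ℕ) < m then
          relu (preact m d (extW L m d W) x (l - 1) ⟨(c : ℕ), hc⟩) else 0)| ≤ CPm := by
        split
        · exact (abs_relu_le _).trans ((hCP (l - 1) W x hx hW (by omega) _).trans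
            (hCPm _ (by omega)))
        · rw [abs_zero]; exact hCPm0
      rw [abs_mul]
      have : |delta L m d (extW L m d W) x l j| *
          |(if hc : (c : ℕ) < m then
            relu (preact m d (extW L m d W) x (l - 1) ⟨(c : ℕ), hc⟩) else 0)| ≤ CDm * CPm :=
        mul_le_mul hδ hrr (abs_nonneg _) hCDm0
      nlinarith [mul_nonneg (Real.sqrt_nonneg (m : ℝ)) hCPm0]

lemma netOut_bound (L m d : ℕ) (hL : 2 ≤ L) (hm : 1 ≤ m) (K : ℝ) (hK : 0 ≤ K) :
    ∃ C : ℝ, 0 ≤ C ∧ ∀ (W : Wts L m d) (x : Fin d → ℝ),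
      (∀ k, |x k| ≤ 1) → EntryBd L m d W K →
      |netOut L m d W x| ≤ C := by
  obtain ⟨CP, hCP0, hCP⟩ := preact_bound L m d hL K hK (L - 2)
  refine ⟨Real.sqrt m * ((m : ℝ) * ((m : ℝ) * (K * CP))), by positivity, ?_⟩
  intro W x hx hW
  rw [netOut, abs_mul, abs_of_nonneg (Real.sqrt_nonneg _)]
  refine mul_le_mul_of_nonneg_left ?_ (Real.sqrt_nonneg _)
  have hL1 : L - 1 < L := by omega
  have := abs_sum_sum_le (fun j k : Fin m =>
    (if (j : ℕ) = 0 then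
      extW L m d W (L - 1) j (colM m d k) * relu (preact m d (extW L m d W) x (L - 2) k)
    else 0)) (K * CP) ?_
  · simpa using this
  · intro j k
    split
    · next hj =>
      rw [abs_mul]
      refine mul_le_mul ?_ ((abs_relu_le _).trans (hCP W x hx hW le_rfl k)) (abs_nonneg _) hK
      simp only [extW, dif_pos hL1]
      refine hW ⟨L - 1, hL1⟩ j (colM m d k) ⟨?_, ?_⟩
      · show (j : ℕ) < rowsOf L m (L - 1)
        rw [rowsOf, if_pos rfl]; omega
      · show ((colM m d k : Fin (m + d)) : ℕ) < colsOf m d (L - 1)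
        rw [colsOf, if_neg (by omega)]
        simpa [colM] using k.isLt
    · rw [abs_zero]; positivity

lemma E4_arith (η Lr Mv s xz G2 : ℝ) (hη0 : 0 < η) (hηM : η * (Lr * Mv ^ 2) ≤ 1 / 2)
    (hs0 : 0 < s) (hs1 : s ≤ 1) (hsle : s ≤ xz) (hG2le : G2 ≤ Lr * Mv ^ 2)
    (hG20 : 0 ≤ G2) :
    η ^ 2 * (s ^ 2 * G2) ≤ 1 / 2 * η * xz := by
  have h2 : s ^ 2 ≤ s := by nlinarith
  have h1 : s ^ 2 * G2 ≤ s ^ 2 * (Lr * Mv ^ 2) := mul_le_mul_of_nonneg_left hG2le (sq_nonneg _)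
  have h3 : η ^ 2 * (s ^ 2 * G2) ≤ η ^ 2 * (s ^ 2 * (Lr * Mv ^ 2)) :=
    mul_le_mul_of_nonneg_left h1 (sq_nonneg _)
  have h4 : η ^ 2 * (s ^ 2 * (Lr * Mv ^ 2)) = (η * (Lr * Mv ^ 2)) * (η * s ^ 2) := by ring
  have h5 : (η * (Lr * Mv ^ 2)) * (η * s ^ 2) ≤ 1 / 2 * (η * s ^ 2) :=
    mul_le_mul_of_nonneg_right hηM (by positivity)
  have h6 : 1 / 2 * (η * s ^ 2) ≤ 1 / 2 * (η * s) := by nlinarith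
  have h7 : 1 / 2 * (η * s) ≤ 1 / 2 * (η * xz) := by nlinarith
  linarith

lemma E5_arith (s A b z E xz xb : ℝ) (hs0 : 0 < s) (hsle : s ≤ xz) (hE0 : 0 ≤ E)
    (hkey : A ≥ b - z - 2 * E) (hconv : xz + (-s) * (b - z) ≤ xb) :
    s * A ≥ xz - xb - 2 * xz * E := by
  have e1 : s * (b - z - 2 * E) ≤ s * A := mul_le_mul_of_nonneg_left hkey hs0.le
  have e3 : s * E ≤ xz * E := mul_le_mul_of_nonneg_right hsle hE0
  nlinarith [e1, hconv, e3]

lemma step_arith (η E s xz xb A G2 D : ℝ) (hη0 : 0 < η)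
    (hD : D = 2 * η * (s * A) - η ^ 2 * (s ^ 2 * G2))
    (hA : s * A ≥ xz - xb - 2 * xz * E)
    (hG2 : η ^ 2 * (s ^ 2 * G2) ≤ 1 / 2 * η * xz) :
    D ≥ (3 / 2 - 4 * E) * η * xz - 2 * η * xb := by
  have h1 : 2 * η * (xz - xb - 2 * xz * E) ≤ 2 * η * (s * A) :=
    mul_le_mul_of_nonneg_left hA (by linarith)
  rw [hD]
  nlinarith [h1, hG2]
set_option maxHeartbeats 1000000 in
/-- Lemma A.2, key technical lemma for online SGD.
If `W* ∈ B(W0, R m^{-1/2})` attains NTRF loss `ε_NTRF` on the `n` streamed examples,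
the step size satisfies `η ≤ c·L⁻¹·M(τ)⁻²`, `W* ∈ B(W0, τ)`, and all SGD iterates
`W^(0),…,W^(n-1)` lie in `B(W0, τ)`, then for every `1 ≤ n' ≤ n`:
`‖W0 − W*‖_F² − ‖W^(n') − W*‖_F² ≥ (3/2 − 4ε_app(τ)) η Σ_{i=1}^{n'} L_i(W^(i-1)) − 2nηε_NTRF`. -/
theorem key_lemma_sgd :
    ∃ c : ℝ, 0 < c ∧
      ∀ (L m d n : ℕ), 2 ≤ L → 1 ≤ m → 1 ≤ d → 1 ≤ n →
      ∀ (S : Fin n → (Fin d → ℝ) × ℝ),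
        (∀ i, ∑ k, ((S i).1 k) ^ 2 = 1) →
        (∀ i, (S i).2 = 1 ∨ (S i).2 = -1) →
      ∀ (W0 Wstar : Wts L m d) (R τ η εntrf : ℝ), 0 < τ → 0 < R →
        inBall L m d W0 Wstar (R / Real.sqrt m) →
        ntrfLoss L m d n (fun i => (S i).1) (fun i => (S i).2) W0 Wstar = εntrf →
        0 < η →
        η ≤ c / ((L : ℝ) * gradBound L m d n (fun i => (S i).1) W0 τ ^ 2) →
        inBall L m d W0 Wstar τ →
        (∀ i < n, inBall L m d W0 (sgdIter L m d (extS n d S) η W0 i) τ) →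
      ∀ n', 1 ≤ n' → n' ≤ n →
        distSq L m d W0 Wstar -
            distSq L m d (sgdIter L m d (extS n d S) η W0 n') Wstar ≥
          (3 / 2 - 4 * epsApp L m d n (fun i => (S i).1) W0 τ) * η *
              ∑ i ∈ Finset.range n',
                sampleLoss L m d (sgdIter L m d (extS n d S) η W0 i)
                  (extS n d S i).1 (extS n d S i).2
            - 2 * (n : ℝ) * η * εntrf := by
  refine ⟨1/2, by norm_num, ?_⟩
  intro L m d n hL hm hd hn S hxnorm hy W0 Wstar R τ η εntrf hτ hR hballR hntrf hη0 hηle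
    hballstar hIter n' hn'1 hn'n
  -- basic data bounds
  have hx1 : ∀ (i : Fin n) (k : Fin d), |(S i).1 k| ≤ 1 := by
    intro i k
    have h1 : ((S i).1 k) ^ 2 ≤ 1 := by
      rw [← hxnorm i]
      exact Finset.single_le_sum (f := fun k' => ((S i).1 k') ^ 2)
        (fun _ _ => sq_nonneg _) (Finset.mem_univ k)
    exact (sq_le_one_iff_abs_le_one _).mp h1
  obtain ⟨K0, hK0⟩ := Finite.exists_le
    (fun p : Fin L × Fin m × Fin (m + d) => |W0 p.1 p.2.1 p.2.2|)
  have hK0' : ∀ l j c, |W0 l j c| ≤ K0 := fun l j c => hK0 (l, j, c)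
  have hK00 : 0 ≤ K0 := (abs_nonneg _).trans (hK0' ⟨0, by omega⟩ ⟨0, hm⟩ ⟨0, by omega⟩)
  set K : ℝ := K0 + τ with hKdef
  have hK : 0 ≤ K := by positivity
  have hEB : ∀ W, inBall L m d W0 W τ → EntryBd L m d W K := by
    intro W hW l j c hblk
    have h1 := inBall_entry_abs hW l j c hblk
    have h2 := hK0' l j c
    calc |W l j c| = |(W l j c - W0 l j c) + W0 l j c| := by ring_nf
      _ ≤ |W l j c - W0 l j c| + |W0 l j c| := abs_add_le _ _
      _ ≤ K := by rw [hKdef]; linarith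
  obtain ⟨CG, hCG0, hCG⟩ := gradLayer_bound L m d hL hm K hK
  obtain ⟨CN, hCN0, hCN⟩ := netOut_bound L m d hL hm K hK
  have hτ0 : (0:ℝ) ≤ τ := hτ.le
  -- bound on gradInner over the ball
  have hGI : ∀ (W W' : Wts L m d), inBall L m d W0 W τ → inBall L m d W0 W' τ →
      ∀ i : Fin n, |gradInner L m d W ((S i).1) (W' - W)|
        ≤ (L : ℝ) * ((m : ℝ) * (((m + d : ℕ) : ℝ) * (CG * (2 * τ)))) := by
    intro W W' hW hW' i
    have hper : ∀ l : Fin L,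
        |inner2 m d (gradLayer L m d W ((S i).1) (l : ℕ)) ((W' - W) l)|
          ≤ (m : ℝ) * (((m + d : ℕ) : ℝ) * (CG * (2 * τ))) := by
      intro l
      have := abs_sum_sum_le (fun (j : Fin m) (c : Fin (m + d)) =>
        gradLayer L m d W ((S i).1) (l : ℕ) j c * (W' - W) l j c) (CG * (2 * τ)) ?_
      · simpa [inner2] using this
      · intro j c
        by_cases hblk : (j : ℕ) < rowsOf L m (l : ℕ) ∧ (c : ℕ) < colsOf m d (l : ℕ)
        · rw [abs_mul]
          refine mul_le_mul (hCG W ((S i).1) (hx1 i) (hEB W hW) (l : ℕ) l.isLt j c) ?_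
            (abs_nonneg _) hCG0
          have h1 := inBall_entry_abs hW l j c hblk
          have h2 := inBall_entry_abs hW' l j c hblk
          have heq : (W' - W) l j c = (W' l j c - W0 l j c) - (W l j c - W0 l j c) := by
            simp only [Pi.sub_apply]; ring
          rw [heq]
          calc |(W' l j c - W0 l j c) - (W l j c - W0 l j c)|
              ≤ |W' l j c - W0 l j c| + |W l j c - W0 l j c| := abs_sub _ _
            _ ≤ 2 * τ := by linarith
        · rw [gradLayer_off_block hL W ((S i).1) (l : ℕ) j c hblk, zero_mul, abs_zero]
          positivity
    calc |gradInner L m d W ((S i).1) (W' - W)|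
        ≤ ∑ l : Fin L, |inner2 m d (gradLayer L m d W ((S i).1) (l : ℕ)) ((W' - W) l)| :=
          Finset.abs_sum_le_sum_abs _ _
      _ ≤ ∑ _l : Fin L, (m : ℝ) * (((m + d : ℕ) : ℝ) * (CG * (2 * τ))) :=
          Finset.sum_le_sum fun l _ => hper l
      _ = (L : ℝ) * ((m : ℝ) * (((m + d : ℕ) : ℝ) * (CG * (2 * τ)))) := by
          simp [Finset.sum_const, nsmul_eq_mul]
  -- epsApp facts
  have hEBdd : BddAbove { e : ℝ | ∃ (i : Fin n) (W W' : Wts L m d),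
      inBall L m d W0 W τ ∧ inBall L m d W0 W' τ ∧
      e = |netOut L m d W' ((S i).1) - netOut L m d W ((S i).1) -
            gradInner L m d W ((S i).1) (W' - W)| } := by
    refine ⟨2 * CN + (L : ℝ) * ((m : ℝ) * (((m + d : ℕ) : ℝ) * (CG * (2 * τ)))), ?_⟩
    rintro e ⟨i, W, W', hW, hW', rfl⟩
    have h1 := hCN W ((S i).1) (hx1 i) (hEB W hW)
    have h2 := hCN W' ((S i).1) (hx1 i) (hEB W' hW')
    have h3 := hGI W W' hW hW' i
    calc |netOut L m d W' ((S i).1) - netOut L m d W ((S i).1) -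
            gradInner L m d W ((S i).1) (W' - W)|
        ≤ |netOut L m d W' ((S i).1)| + |netOut L m d W ((S i).1)| +
            |gradInner L m d W ((S i).1) (W' - W)| := by
          have h4 := abs_sub (netOut L m d W' ((S i).1) - netOut L m d W ((S i).1))
            (gradInner L m d W ((S i).1) (W' - W))
          have h5 := abs_sub (netOut L m d W' ((S i).1)) (netOut L m d W ((S i).1))
          linarith
      _ ≤ 2 * CN + (L : ℝ) * ((m : ℝ) * (((m + d : ℕ) : ℝ) * (CG * (2 * τ)))) := by
          linarith
  have hεle : ∀ (i : Fin n) (W W' : Wts L m d), inBall L m d W0 W τ → inBall L m d W0 W' τ →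
      |netOut L m d W' ((S i).1) - netOut L m d W ((S i).1) -
        gradInner L m d W ((S i).1) (W' - W)| ≤ epsApp L m d n (fun i => (S i).1) W0 τ := by
    intro i W W' hW hW'
    exact le_csSup hEBdd ⟨i, W, W', hW, hW', rfl⟩
  have hε0 : 0 ≤ epsApp L m d n (fun i => (S i).1) W0 τ := by
    have hzero : (0:ℝ) = |netOut L m d W0 ((S ⟨0, by omega⟩).1) -
        netOut L m d W0 ((S ⟨0, by omega⟩).1) -
        gradInner L m d W0 ((S ⟨0, by omega⟩).1) (W0 - W0)| := by
      have : gradInner L m d W0 ((S ⟨0, by omega⟩).1) (W0 - W0) = 0 := by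
        simp [gradInner, inner2, sub_self]
      rw [this]; simp
    exact le_csSup hEBdd ⟨⟨0, by omega⟩, W0, W0, inBall_self L m d W0 hτ0,
      inBall_self L m d W0 hτ0, hzero⟩
  -- gradBound facts
  have hlnsq : ∀ (i : Fin n) (l : Fin L) (W : Wts L m d), inBall L m d W0 W τ →
      layerNormSq L m d (l : ℕ) (gradLayer L m d W ((S i).1) (l : ℕ))
        ≤ (m : ℝ) * (((m + d : ℕ) : ℝ) * CG ^ 2) := by
    intro i l W hW
    unfold layerNormSq
    calc ∑ j : Fin m, ∑ c : Fin (m + d),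
          (if (j : ℕ) < rowsOf L m (l : ℕ) ∧ (c : ℕ) < colsOf m d (l : ℕ) then
            (gradLayer L m d W ((S i).1) (l : ℕ) j c) ^ 2 else 0)
        ≤ ∑ _j : Fin m, ∑ _c : Fin (m + d), CG ^ 2 := by
          refine Finset.sum_le_sum fun j _ => Finset.sum_le_sum fun c _ => ?_
          split
          · rw [← sq_abs]
            exact pow_le_pow_left₀ (abs_nonneg _)
              (hCG W ((S i).1) (hx1 i) (hEB W hW) (l : ℕ) l.isLt j c) 2
          · positivity
      _ = (m : ℝ) * (((m + d : ℕ) : ℝ) * CG ^ 2) := by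
          simp [Finset.sum_const, nsmul_eq_mul]
  have hMBdd : BddAbove { e : ℝ | ∃ (i : Fin n) (l : Fin L) (W : Wts L m d),
      inBall L m d W0 W τ ∧
      e = Real.sqrt (layerNormSq L m d (l : ℕ) (gradLayer L m d W ((S i).1) (l : ℕ))) } := by
    refine ⟨Real.sqrt ((m : ℝ) * (((m + d : ℕ) : ℝ) * CG ^ 2)), ?_⟩
    rintro e ⟨i, l, W, hW, rfl⟩
    exact Real.sqrt_le_sqrt (hlnsq i l W hW)
  set Mv := gradBound L m d n (fun i => (S i).1) W0 τ with hMvdef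
  have hMle : ∀ (i : Fin n) (l : Fin L) (W : Wts L m d), inBall L m d W0 W τ →
      Real.sqrt (layerNormSq L m d (l : ℕ) (gradLayer L m d W ((S i).1) (l : ℕ))) ≤ Mv := by
    intro i l W hW
    exact le_csSup hMBdd ⟨i, l, W, hW, rfl⟩
  have hM0 : 0 ≤ Mv :=
    (Real.sqrt_nonneg _).trans (hMle ⟨0, by omega⟩ ⟨0, by omega⟩ W0 (inBall_self L m d W0 hτ0))
  have hηM : η * ((L : ℝ) * Mv ^ 2) ≤ 1 / 2 := by
    rcases eq_or_lt_of_le (show (0:ℝ) ≤ (L : ℝ) * Mv ^ 2 by positivity) with h | h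
    · rw [← h, div_zero] at hηle; linarith
    · rw [le_div_iff₀ h] at hηle; linarith
  -- the per-step estimate
  set E := epsApp L m d n (fun i => (S i).1) W0 τ with hEdef
  have step : ∀ i, i < n' →
      distSq L m d (sgdIter L m d (extS n d S) η W0 i) Wstar -
          distSq L m d (sgdIter L m d (extS n d S) η W0 (i + 1)) Wstar ≥
        (3 / 2 - 4 * E) * η *
            sampleLoss L m d (sgdIter L m d (extS n d S) η W0 i)
              (extS n d S i).1 (extS n d S i).2
          - 2 * η * xent ((extS n d S i).2 * ntrf L m d W0 Wstar ((extS n d S i).1)) := by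
    intro i hi
    have hin : i < n := lt_of_lt_of_le hi hn'n
    have hSe : extS n d S i = S ⟨i, hin⟩ := by
      rw [extS]; exact dif_pos hin
    rw [hSe]
    set Wi := sgdIter L m d (extS n d S) η W0 i with hWidef
    have hballi : inBall L m d W0 Wi τ := hIter i hin
    set xi := (S ⟨i, hin⟩).1 with hxidef
    set yi := (S ⟨i, hin⟩).2 with hyidef
    set z := yi * netOut L m d Wi xi with hzdef
    set u := xent' z * yi with hudef
    -- update identity
    have hnext : ∀ l : Fin L, (sgdIter L m d (extS n d S) η W0 (i + 1)) l
        = fun j c => Wi l j c - η * (u * gradLayer L m d Wi xi (l : ℕ) j c) := by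
      intro l; funext j c
      show Wi l j c - η * sampleLossGrad L m d (extS n d S i).1 (extS n d S i).2 Wi (l : ℕ) j c
        = _
      rw [hSe, sampleLossGrad, hudef, hzdef]
      try ring
    have hGoff : ∀ (l : Fin L) (j : Fin m) (c : Fin (m + d)),
        ¬((j : ℕ) < rowsOf L m (l : ℕ) ∧ (c : ℕ) < colsOf m d (l : ℕ)) →
        gradLayer L m d Wi xi (l : ℕ) j c = 0 :=
      fun l j c h => gradLayer_off_block hL Wi xi (l : ℕ) j c h
    have hper : ∀ l : Fin L,
        layerNormSq L m d (l : ℕ) (sgdIter L m d (extS n d S) η W0 (i + 1) l - Wstar l)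
          = layerNormSq L m d (l : ℕ) (Wi l - Wstar l)
            - 2 * η * (u * inner2 m d (gradLayer L m d Wi xi (l : ℕ)) (Wi l - Wstar l))
            + η ^ 2 * (u ^ 2 * inner2 m d (gradLayer L m d Wi xi (l : ℕ))
                (gradLayer L m d Wi xi (l : ℕ))) := by
      intro l
      have harg : (sgdIter L m d (extS n d S) η W0 (i + 1) l - Wstar l)
          = fun j c => (Wi l - Wstar l) j c - η * (u * gradLayer L m d Wi xi (l : ℕ) j c) := by
        funext j c
        have h1 : (sgdIter L m d (extS n d S) η W0 (i + 1)) l j c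
            = Wi l j c - η * (u * gradLayer L m d Wi xi (l : ℕ) j c) := by
          rw [hnext l]
        simp only [Pi.sub_apply, h1]
        ring
      rw [harg]
      exact layerNormSq_step L m d (l : ℕ) η u (Wi l - Wstar l)
        (gradLayer L m d Wi xi (l : ℕ)) (hGoff l)
    have hdist : distSq L m d (sgdIter L m d (extS n d S) η W0 (i + 1)) Wstar
        = distSq L m d Wi Wstar
          - 2 * η * (u * gradInner L m d Wi xi (Wi - Wstar))
          + η ^ 2 * (u ^ 2 * ∑ l : Fin L, inner2 m d (gradLayer L m d Wi xi (l : ℕ))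
              (gradLayer L m d Wi xi (l : ℕ))) := by
      unfold distSq gradInner
      rw [Finset.sum_congr (rfl : (Finset.univ : Finset (Fin L)) = Finset.univ)
        (fun l _ => hper l)]
      rw [Finset.sum_add_distrib, Finset.sum_sub_distrib]
      rw [← Finset.mul_sum, ← Finset.mul_sum, ← Finset.mul_sum, ← Finset.mul_sum]
      try rfl
    clear_value u z yi xi Wi
    -- scalar facts
    have hy2 : yi = 1 ∨ yi = -1 := by rw [hyidef]; exact hy ⟨i, hin⟩
    have hu2 : u ^ 2 = (negXent' z) ^ 2 := by
      rw [hudef, xent'_eq_neg]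
      rcases hy2 with h | h <;> rw [h] <;> ring
    have hs0 : 0 < negXent' z := negXent'_pos z
    have hs1 : negXent' z ≤ 1 := negXent'_le_one z
    have hsle : negXent' z ≤ xent z := negXent'_le_xent z
    -- gradient sum bound
    have hGG : ∀ l : Fin L, inner2 m d (gradLayer L m d Wi xi (l : ℕ))
        (gradLayer L m d Wi xi (l : ℕ)) ≤ Mv ^ 2 := by
      intro l
      rw [inner2_self_eq_layerNormSq L m d (l : ℕ) _ (hGoff l)]
      have h1 := hMle ⟨i, hin⟩ l Wi hballi
      rw [← hxidef] at h1
      have h2 := layerNormSq_nonneg L m d (l : ℕ) (gradLayer L m d Wi xi (l : ℕ))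
      calc layerNormSq L m d (l : ℕ) (gradLayer L m d Wi xi (l : ℕ))
          = Real.sqrt (layerNormSq L m d (l : ℕ) (gradLayer L m d Wi xi (l : ℕ))) ^ 2 :=
            (Real.sq_sqrt h2).symm
        _ ≤ Mv ^ 2 := pow_le_pow_left₀ (Real.sqrt_nonneg _) h1 2
    have hGGsum : ∑ l : Fin L, inner2 m d (gradLayer L m d Wi xi (l : ℕ))
        (gradLayer L m d Wi xi (l : ℕ)) ≤ (L : ℝ) * Mv ^ 2 := by
      calc ∑ l : Fin L, inner2 m d (gradLayer L m d Wi xi (l : ℕ))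
            (gradLayer L m d Wi xi (l : ℕ))
          ≤ ∑ _l : Fin L, Mv ^ 2 := Finset.sum_le_sum fun l _ => hGG l
        _ = (L : ℝ) * Mv ^ 2 := by simp [Finset.sum_const, nsmul_eq_mul]
    have hGGsum0 : 0 ≤ ∑ l : Fin L, inner2 m d (gradLayer L m d Wi xi (l : ℕ))
        (gradLayer L m d Wi xi (l : ℕ)) :=
      Finset.sum_nonneg fun l _ => inner2_nonneg_self m d _
    -- approximation facts
    have happrox1 := hεle ⟨i, hin⟩ Wi Wstar hballi hballstar
    have happrox2 := hεle ⟨i, hin⟩ W0 Wstar (inBall_self L m d W0 hτ0) hballstar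
    rw [← hxidef] at happrox1 happrox2
    rw [abs_le] at happrox1 happrox2
    have hntrfeq : ntrf L m d W0 Wstar xi
        = netOut L m d W0 xi + gradInner L m d W0 xi (Wstar - W0) := rfl
    have hkey1 : yi * gradInner L m d Wi xi (Wstar - Wi)
        ≥ yi * ntrf L m d W0 Wstar xi - z - 2 * E := by
      obtain ⟨ha1, ha2⟩ := happrox1
      obtain ⟨hb1, hb2⟩ := happrox2
      rw [hzdef, hntrfeq]
      rcases hy2 with h | h
      · rw [h]; linarith only [ha1, ha2, hb1, hb2, hε0]
      · rw [h]; linarith only [ha1, ha2, hb1, hb2, hε0]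
    have hconv := xent_tangent z (yi * ntrf L m d W0 Wstar xi)
    rw [xent'_eq_neg] at hconv
    -- combine
    have E3 : u * gradInner L m d Wi xi (Wi - Wstar)
        = negXent' z * (yi * gradInner L m d Wi xi (Wstar - Wi)) := by
      rw [hudef, xent'_eq_neg, gradInner_sub_neg L m d Wi xi Wi Wstar]
      ring
    have E5 : negXent' z * (yi * gradInner L m d Wi xi (Wstar - Wi))
        ≥ xent z - xent (yi * ntrf L m d W0 Wstar xi) - 2 * xent z * E :=
      E5_arith (negXent' z) (yi * gradInner L m d Wi xi (Wstar - Wi))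
        (yi * ntrf L m d W0 Wstar xi) z E (xent z) (xent (yi * ntrf L m d W0 Wstar xi))
        hs0 hsle hε0 hkey1 hconv
    have E4 : η ^ 2 * ((negXent' z) ^ 2 * ∑ l : Fin L, inner2 m d
        (gradLayer L m d Wi xi (l : ℕ)) (gradLayer L m d Wi xi (l : ℕ)))
        ≤ 1 / 2 * η * xent z :=
      E4_arith η (L : ℝ) Mv (negXent' z) (xent z) _ hη0 hηM hs0 hs1 hsle hGGsum hGGsum0
    have main : distSq L m d Wi Wstar -
        distSq L m d (sgdIter L m d (extS n d S) η W0 (i + 1)) Wstar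
        = 2 * η * (negXent' z * (yi * gradInner L m d Wi xi (Wstar - Wi)))
          - η ^ 2 * ((negXent' z) ^ 2 * ∑ l : Fin L, inner2 m d
              (gradLayer L m d Wi xi (l : ℕ)) (gradLayer L m d Wi xi (l : ℕ))) := by
      rw [hdist, E3, hu2]; ring
    rw [sampleLoss, ← hzdef]
    exact step_arith η E (negXent' z) (xent z) (xent (yi * ntrf L m d W0 Wstar xi))
      (yi * gradInner L m d Wi xi (Wstar - Wi))
      (∑ l : Fin L, inner2 m d (gradLayer L m d Wi xi (l : ℕ))
        (gradLayer L m d Wi xi (l : ℕ)))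
      _ hη0 main E5 E4
  -- telescoping
  have htel : distSq L m d W0 Wstar -
      distSq L m d (sgdIter L m d (extS n d S) η W0 n') Wstar
      = ∑ i ∈ Finset.range n',
          (distSq L m d (sgdIter L m d (extS n d S) η W0 i) Wstar -
            distSq L m d (sgdIter L m d (extS n d S) η W0 (i + 1)) Wstar) := by
    rw [Finset.sum_range_sub' (fun i =>
      distSq L m d (sgdIter L m d (extS n d S) η W0 i) Wstar) n']
    rfl
  have hsum1 : ∑ i ∈ Finset.range n',
      (distSq L m d (sgdIter L m d (extS n d S) η W0 i) Wstar -
        distSq L m d (sgdIter L m d (extS n d S) η W0 (i + 1)) Wstar)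
      ≥ ∑ i ∈ Finset.range n',
        ((3 / 2 - 4 * E) * η *
            sampleLoss L m d (sgdIter L m d (extS n d S) η W0 i)
              (extS n d S i).1 (extS n d S i).2
          - 2 * η * xent ((extS n d S i).2 * ntrf L m d W0 Wstar ((extS n d S i).1))) :=
    Finset.sum_le_sum fun i hi => step i (Finset.mem_range.mp hi)
  have hsum2 : ∑ i ∈ Finset.range n',
      ((3 / 2 - 4 * E) * η *
          sampleLoss L m d (sgdIter L m d (extS n d S) η W0 i)
            (extS n d S i).1 (extS n d S i).2
        - 2 * η * xent ((extS n d S i).2 * ntrf L m d W0 Wstar ((extS n d S i).1)))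
      = (3 / 2 - 4 * E) * η * (∑ i ∈ Finset.range n',
          sampleLoss L m d (sgdIter L m d (extS n d S) η W0 i)
            (extS n d S i).1 (extS n d S i).2)
        - 2 * η * ∑ i ∈ Finset.range n',
            xent ((extS n d S i).2 * ntrf L m d W0 Wstar ((extS n d S i).1)) := by
    rw [Finset.sum_sub_distrib, ← Finset.mul_sum, ← Finset.mul_sum]
  have hb_le : ∑ i ∈ Finset.range n',
      xent ((extS n d S i).2 * ntrf L m d W0 Wstar ((extS n d S i).1)) ≤ (n : ℝ) * εntrf := by
    have hstep1 : ∑ i ∈ Finset.range n',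
        xent ((extS n d S i).2 * ntrf L m d W0 Wstar ((extS n d S i).1))
        ≤ ∑ i ∈ Finset.range n,
          xent ((extS n d S i).2 * ntrf L m d W0 Wstar ((extS n d S i).1)) :=
      Finset.sum_le_sum_of_subset_of_nonneg (Finset.range_subset_range.mpr hn'n)
        (fun i _ _ => xent_nonneg _)
    have hstep2 : ∑ i ∈ Finset.range n,
        xent ((extS n d S i).2 * ntrf L m d W0 Wstar ((extS n d S i).1))
        = ∑ i : Fin n, xent ((S i).2 * ntrf L m d W0 Wstar ((S i).1)) := by
      rw [← Fin.sum_univ_eq_sum_range (fun i =>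
        xent ((extS n d S i).2 * ntrf L m d W0 Wstar ((extS n d S i).1))) n]
      refine Finset.sum_congr rfl fun i _ => ?_
      have : extS n d S (i : ℕ) = S i := by
        rw [extS]; rw [dif_pos i.isLt]
      rw [this]
    have hn0 : ((n : ℝ)) ≠ 0 := by positivity
    have hstep3 : ∑ i : Fin n, xent ((S i).2 * ntrf L m d W0 Wstar ((S i).1))
        = (n : ℝ) * εntrf := by
      rw [ntrfLoss] at hntrf
      field_simp at hntrf
      linarith [hntrf]
    linarith
  have hfinal := mul_le_mul_of_nonneg_left hb_le (show (0:ℝ) ≤ 2 * η by positivity)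
  rw [ge_iff_le, htel]
  calc (3 / 2 - 4 * E) * η * (∑ i ∈ Finset.range n',
        sampleLoss L m d (sgdIter L m d (extS n d S) η W0 i)
          (extS n d S i).1 (extS n d S i).2) - 2 * (n : ℝ) * η * εntrf
      ≤ (3 / 2 - 4 * E) * η * (∑ i ∈ Finset.range n',
          sampleLoss L m d (sgdIter L m d (extS n d S) η W0 i)
            (extS n d S i).1 (extS n d S i).2)
        - 2 * η * ∑ i ∈ Finset.range n',
            xent ((extS n d S i).2 * ntrf L m d W0 Wstar ((extS n d S i).1)) := by
        linarith
    _ ≤ ∑ i ∈ Finset.range n',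
        (distSq L m d (sgdIter L m d (extS n d S) η W0 i) Wstar -
          distSq L m d (sgdIter L m d (extS n d S) η W0 (i + 1)) Wstar) := by
        rw [← hsum2]; exact hsum1
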